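/- Two words are Baxter-equivalent if and only if they are both sylvester-equivalent and #-sylvester-equivalent: for u, v ∈ A*, u ≡_B v iff u ≡_S v and u ≡_{S#} v. -/

import Mathlib

open scoped Classical

/-- Baxter adjacency relations on words over the alphabet of natural numbers. -/
def BaxterAdj (w w' : List ℕ) : Prop :=
  (∃ (a b c d : ℕ) (u v : List ℕ), a ≤ b ∧ b < c ∧ c ≤ d ∧
      w = c :: (u ++ a :: d :: (v ++ [b])) ∧ w' = c :: (u ++ d :: a :: (v ++ [b]))) ∨
  (∃ (a b c d : ℕ) (u v : List ℕ), a < b ∧ b ≤ c ∧ c < d ∧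
      w = b :: (u ++ d :: a :: (v ++ [c])) ∧ w' = b :: (u ++ a :: d :: (v ++ [c])))

/-- One rewriting step: an adjacency applied inside a word (congruence context). -/
def BaxterStep (w w' : List ℕ) : Prop :=
  ∃ (p s u v : List ℕ), BaxterAdj u v ∧ w = p ++ u ++ s ∧ w' = p ++ v ++ s

/-- The Baxter congruence: the equivalence generated by the Baxter steps. -/
def BaxterEquiv : List ℕ → List ℕ → Prop := Relation.EqvGen BaxterStep

/-- Sylvester adjacency: a c u b ≡ c a u b when a ≤ b < c. -/
def SylvAdj (w w' : List ℕ) : Prop :=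
  ∃ (a b c : ℕ) (u : List ℕ), a ≤ b ∧ b < c ∧
    w = a :: c :: (u ++ [b]) ∧ w' = c :: a :: (u ++ [b])

def SylvStep (w w' : List ℕ) : Prop :=
  ∃ (p s u v : List ℕ), SylvAdj u v ∧ w = p ++ u ++ s ∧ w' = p ++ v ++ s

def SylvEquiv : List ℕ → List ℕ → Prop := Relation.EqvGen SylvStep

/-- #-sylvester adjacency: b u a c ≡ b u c a when a < b ≤ c. -/
def SylvHAdj (w w' : List ℕ) : Prop :=
  ∃ (a b c : ℕ) (u : List ℕ), a < b ∧ b ≤ c ∧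
    w = b :: (u ++ [a, c]) ∧ w' = b :: (u ++ [c, a])

def SylvHStep (w w' : List ℕ) : Prop :=
  ∃ (p s u v : List ℕ), SylvHAdj u v ∧ w = p ++ u ++ s ∧ w' = p ++ v ++ s

def SylvHEquiv : List ℕ → List ℕ → Prop := Relation.EqvGen SylvHStep

/-- The standardized word of `u`: position `i` receives the rank of the letter `u i`
(ties broken from left to right), ranks starting at `1`. -/
def std (u : List ℕ) : List ℕ :=
  (List.range u.length).map fun i =>
    ((List.range u.length).filter fun j =>
      decide (u.getD j 0 < u.getD i 0 ∨ (u.getD j 0 = u.getD i 0 ∧ j < i))).length + 1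

/-- The maximal letter of a word. -/
def wordMax (u : List ℕ) : ℕ := u.foldr max 0

/-- The Schützenberger transformation: reverse and complement each letter w.r.t. max + 1. -/
def schutz (u : List ℕ) : List ℕ := u.reverse.map fun x => wordMax u + 1 - x

/-- Labeled binary trees. -/
inductive BT where
  | leaf : BT
  | node : BT → ℕ → BT → BT
deriving DecidableEq

/-- Leaf insertion into a left binary search tree. -/
def leafInsL : BT → ℕ → BT
  | .leaf, a => .node .leaf a .leaf
  | .node l b r, a => if a < b then .node (leafInsL l a) b r else .node l b (leafInsL r a)

/-- Leaf insertion into a right binary search tree. -/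
def leafInsR : BT → ℕ → BT
  | .leaf, a => .node .leaf a .leaf
  | .node l b r, a => if a ≤ b then .node (leafInsR l a) b r else .node l b (leafInsR r a)

/-- The lower restricted tree `T_{≤ a}` of a right binary search tree. -/
def splitLE : BT → ℕ → BT
  | .leaf, _ => .leaf
  | .node l b r, a => if b ≤ a then .node l b (splitLE r a) else splitLE l a

/-- The higher restricted tree `T_{> a}` of a right binary search tree. -/
def splitGT : BT → ℕ → BT
  | .leaf, _ => .leaf
  | .node l b r, a => if b ≤ a then splitGT r a else .node (splitGT l a) b r

/-- Root insertion into a right binary search tree. -/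
def rootIns (t : BT) (a : ℕ) : BT := .node (splitLE t a) a (splitGT t a)

/-- The left tree of the P-symbol: leaf insertions from left to right. -/
def insL (u : List ℕ) : BT := u.foldl leafInsL .leaf

/-- The right tree of the P-symbol: root insertions from left to right. -/
def insR (u : List ℕ) : BT := u.foldl rootIns .leaf

/-- The P-symbol of a word. -/
def Psymb (u : List ℕ) : BT × BT := (insL u, insR u)

/-- Unlabeled binary trees. -/
inductive UBT where
  | leaf : UBT
  | node : UBT → UBT → UBT
deriving DecidableEq

/-- The shape of a labeled binary tree. -/
def shape : BT → UBT
  | .leaf => .leaf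
  | .node l _ r => .node (shape l) (shape r)

/-- The shape of the P-symbol of a word. -/
def Pshape (u : List ℕ) : UBT × UBT := (shape (insL u), shape (insR u))

/-- Number of internal nodes. -/
def sizeU : UBT → ℕ
  | .leaf => 0
  | .node l r => sizeU l + sizeU r + 1

/-- Orientations of the leaves, from left to right: `true` means right-oriented
(the leaf is the right child of its parent); the parameter is the orientation
assigned if the tree is reduced to a leaf. -/
def loU : UBT → Bool → List Bool
  | .leaf, b => [b]
  | .node l r, _ => loU l false ++ loU r true

/-- Leaf orientations of a labeled binary tree. -/
def loB : BT → Bool → List Bool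
  | .leaf, b => [b]
  | .node l _ r, _ => loB l false ++ loB r true

/-- The canopy: orientations of the leaves except the first and the last one. -/
def canU (t : UBT) : List Bool := ((loU t false).drop 1).dropLast

/-- A pair of twin binary trees: same number of nodes and complementary canopies. -/
def IsTwin (J : UBT × UBT) : Prop :=
  sizeU J.1 = sizeU J.2 ∧ (canU J.1).length = (canU J.2).length ∧
    ∀ i < (canU J.1).length, (canU J.1).getD i false ≠ (canU J.2).getD i false

/-- `σ` is (the word of) a permutation of `{1, …, n}`. -/
def IsPerm (n : ℕ) (σ : List ℕ) : Prop := σ.Perm (List.range' 1 n)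

/-- Covering-type step of the right permutohedron (weak) order: exchange of two
adjacent letters `a < b`. -/
def PermutoStep (σ ν : List ℕ) : Prop :=
  ∃ (p s : List ℕ) (a b : ℕ), a < b ∧ σ = p ++ a :: b :: s ∧ ν = p ++ b :: a :: s

/-- The right permutohedron (weak) order. -/
def PermutoLe : List ℕ → List ℕ → Prop := Relation.ReflTransGen PermutoStep

/-- Baxter permutations: avoiding the generalized patterns 2-41-3 and 3-14-2. -/
def IsBaxterPerm (σ : List ℕ) : Prop :=
  ∀ i j k, i < j → j + 1 < k → k < σ.length →
    ¬(σ.getD (j+1) 0 < σ.getD i 0 ∧ σ.getD i 0 < σ.getD k 0 ∧ σ.getD k 0 < σ.getD j 0) ∧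
    ¬(σ.getD j 0 < σ.getD k 0 ∧ σ.getD k 0 < σ.getD i 0 ∧ σ.getD i 0 < σ.getD (j+1) 0)

namespace BaxterAux

/-! ### Basic insertion folds -/

def insLt (t : BT) (w : List ℕ) : BT := w.foldl leafInsL t
def insRt (t : BT) (w : List ℕ) : BT := w.foldr (fun a s => leafInsR s a) t

@[simp] lemma insLt_nil (t : BT) : insLt t [] = t := rfl
@[simp] lemma insLt_cons (t : BT) (a : ℕ) (w : List ℕ) :
    insLt t (a :: w) = insLt (leafInsL t a) w := rfl
@[simp] lemma insRt_nil (t : BT) : insRt t [] = t := rfl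
@[simp] lemma insRt_cons (t : BT) (a : ℕ) (w : List ℕ) :
    insRt t (a :: w) = leafInsR (insRt t w) a := rfl
lemma insLt_append (t : BT) (A B : List ℕ) : insLt t (A ++ B) = insLt (insLt t A) B :=
  List.foldl_append ..
lemma insRt_append (t : BT) (A B : List ℕ) : insRt t (A ++ B) = insRt (insRt t B) A :=
  List.foldr_append ..

lemma leafInsL_node (l : BT) (b : ℕ) (r : BT) (a : ℕ) :
    leafInsL (.node l b r) a =
      if a < b then .node (leafInsL l a) b r else .node l b (leafInsL r a) := rfl
lemma leafInsR_node (l : BT) (b : ℕ) (r : BT) (a : ℕ) :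
    leafInsR (.node l b r) a =
      if a ≤ b then .node (leafInsR l a) b r else .node l b (leafInsR r a) := rfl

lemma leafInsL_ne_leaf (t : BT) (a : ℕ) : leafInsL t a ≠ .leaf := by
  cases t <;> simp [leafInsL] <;> split <;> simp
lemma leafInsR_ne_leaf (t : BT) (a : ℕ) : leafInsR t a ≠ .leaf := by
  cases t <;> simp [leafInsR] <;> split <;> simp

lemma leafInsL_inj {a : ℕ} : ∀ {t t' : BT}, leafInsL t a = leafInsL t' a → t = t' := by
  intro t
  induction t with
  | leaf =>
      intro t' h
      cases t' with
      | leaf => rfl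
      | node l b r =>
          exfalso
          simp only [leafInsL] at h
          split at h <;> rw [BT.node.injEq] at h
          · exact absurd h.1.symm (leafInsL_ne_leaf _ _)
          · exact absurd h.2.2.symm (leafInsL_ne_leaf _ _)
  | node l b r ihl ihr =>
      intro t' h
      cases t' with
      | leaf =>
          exfalso
          simp only [leafInsL] at h
          split at h <;> rw [BT.node.injEq] at h
          · exact absurd h.1 (leafInsL_ne_leaf _ _)
          · exact absurd h.2.2 (leafInsL_ne_leaf _ _)
      | node l' b' r' =>
          simp only [leafInsL] at h
          have hb : b = b' := by
            split at h <;> split at h <;> rw [BT.node.injEq] at h <;> tauto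
          subst hb
          split at h <;> rw [BT.node.injEq] at h
          · obtain ⟨h1, _, h3⟩ := h; rw [ihl h1, h3]
          · obtain ⟨h1, _, h3⟩ := h; rw [h1, ihr h3]

lemma leafInsR_inj {a : ℕ} : ∀ {t t' : BT}, leafInsR t a = leafInsR t' a → t = t' := by
  intro t
  induction t with
  | leaf =>
      intro t' h
      cases t' with
      | leaf => rfl
      | node l b r =>
          exfalso
          simp only [leafInsR] at h
          split at h <;> rw [BT.node.injEq] at h
          · exact absurd h.1.symm (leafInsR_ne_leaf _ _)
          · exact absurd h.2.2.symm (leafInsR_ne_leaf _ _)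
  | node l b r ihl ihr =>
      intro t' h
      cases t' with
      | leaf =>
          exfalso
          simp only [leafInsR] at h
          split at h <;> rw [BT.node.injEq] at h
          · exact absurd h.1 (leafInsR_ne_leaf _ _)
          · exact absurd h.2.2 (leafInsR_ne_leaf _ _)
      | node l' b' r' =>
          simp only [leafInsR] at h
          have hb : b = b' := by
            split at h <;> split at h <;> rw [BT.node.injEq] at h <;> tauto
          subst hb
          split at h <;> rw [BT.node.injEq] at h
          · obtain ⟨h1, _, h3⟩ := h; rw [ihl h1, h3]
          · obtain ⟨h1, _, h3⟩ := h; rw [h1, ihr h3]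

lemma insLt_inj : ∀ (w : List ℕ) {t t' : BT}, insLt t w = insLt t' w → t = t' := by
  intro w
  induction w with
  | nil => intro t t' h; simpa using h
  | cons a w ih =>
      intro t t' h
      simp only [insLt_cons] at h
      exact leafInsL_inj (ih h)

lemma insRt_inj : ∀ (w : List ℕ) {t t' : BT}, insRt t w = insRt t' w → t = t' := by
  intro w
  induction w with
  | nil => intro t t' h; simpa using h
  | cons a w ih =>
      intro t t' h
      simp only [insRt_cons] at h
      exact ih (leafInsR_inj h)

/-! ### Label multisets -/

def mlab : BT → Multiset ℕ
  | .leaf => 0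
  | .node l b r => b ::ₘ (mlab l + mlab r)

@[simp] lemma mlab_leaf : mlab .leaf = 0 := rfl
@[simp] lemma mlab_node (l : BT) (b : ℕ) (r : BT) :
    mlab (.node l b r) = b ::ₘ (mlab l + mlab r) := rfl

lemma mlab_leafInsL (t : BT) (a : ℕ) : mlab (leafInsL t a) = a ::ₘ mlab t := by
  induction t with
  | leaf => simp [leafInsL]
  | node l b r ihl ihr =>
      simp only [leafInsL]
      split
      · rw [mlab_node, mlab_node, ihl, Multiset.cons_add, Multiset.cons_swap]
      · rw [mlab_node, mlab_node, ihr, Multiset.add_cons, Multiset.cons_swap]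

lemma mlab_leafInsR (t : BT) (a : ℕ) : mlab (leafInsR t a) = a ::ₘ mlab t := by
  induction t with
  | leaf => simp [leafInsR]
  | node l b r ihl ihr =>
      simp only [leafInsR]
      split
      · rw [mlab_node, mlab_node, ihl, Multiset.cons_add, Multiset.cons_swap]
      · rw [mlab_node, mlab_node, ihr, Multiset.add_cons, Multiset.cons_swap]

lemma mlab_insLt (t : BT) (w : List ℕ) : mlab (insLt t w) = mlab t + (w : Multiset ℕ) := by
  induction w generalizing t with
  | nil => simp
  | cons a w ih =>
      simp [ih, mlab_leafInsL, Multiset.add_cons, ← Multiset.cons_coe]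

lemma mlab_insRt (t : BT) (w : List ℕ) : mlab (insRt t w) = mlab t + (w : Multiset ℕ) := by
  induction w generalizing t with
  | nil => simp
  | cons a w ih =>
      simp [ih, mlab_leafInsR, Multiset.add_cons, ← Multiset.cons_coe]

/-! ### Splitting insertions at a node -/

lemma insLt_node (l r : BT) (b : ℕ) (w : List ℕ) :
    insLt (.node l b r) w =
      .node (insLt l (w.filter (fun y => decide (y < b)))) b
            (insLt r (w.filter (fun y => decide (¬ y < b)))) := by
  induction w generalizing l r with
  | nil => simp
  | cons a w ih =>
      by_cases h : a < b
      · simp [leafInsL_node, h, ih, List.filter_cons]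
      · simp [leafInsL_node, h, ih, List.filter_cons, show b ≤ a from not_lt.1 h]

lemma insRt_node (l r : BT) (b : ℕ) (w : List ℕ) :
    insRt (.node l b r) w =
      .node (insRt l (w.filter (fun y => decide (y ≤ b)))) b
            (insRt r (w.filter (fun y => decide (¬ y ≤ b)))) := by
  induction w with
  | nil => simp
  | cons a w ih =>
      by_cases h : a ≤ b
      · simp [insRt_cons, ih, List.filter_cons, h, leafInsR_node]
      · simp [insRt_cons, ih, List.filter_cons, h, leafInsR_node,
          show b < a from not_le.1 h]

/-! ### Separation predicates -/

def SepL : BT → ℕ → ℕ → Prop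
  | .leaf, _, _ => False
  | .node l b r, x, z =>
      if x < b then (if z < b then SepL l x z else True)
      else (if z < b then True else SepL r x z)

def SepR : BT → ℕ → ℕ → Prop
  | .leaf, _, _ => False
  | .node l b r, x, z =>
      if x ≤ b then (if z ≤ b then SepR l x z else True)
      else (if z ≤ b then True else SepR r x z)

@[simp] lemma SepL_leaf (x z : ℕ) : SepL .leaf x z = False := rfl
lemma SepL_node (l : BT) (b : ℕ) (r : BT) (x z : ℕ) :
    SepL (.node l b r) x z =
      if x < b then (if z < b then SepL l x z else True)
      else (if z < b then True else SepL r x z) := rfl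
@[simp] lemma SepR_leaf (x z : ℕ) : SepR .leaf x z = False := rfl
lemma SepR_node (l : BT) (b : ℕ) (r : BT) (x z : ℕ) :
    SepR (.node l b r) x z =
      if x ≤ b then (if z ≤ b then SepR l x z else True)
      else (if z ≤ b then True else SepR r x z) := rfl

lemma sepL_comm {t : BT} {x z : ℕ} (h : SepL t x z) :
    leafInsL (leafInsL t x) z = leafInsL (leafInsL t z) x := by
  induction t with
  | leaf => exact absurd h (by simp)
  | node l b r ihl ihr =>
      rw [SepL_node] at h
      by_cases hx : x < b <;> by_cases hz : z < b <;>
        simp [leafInsL_node, hx, hz] at h ⊢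
      · exact ihl h
      · exact ihr h

lemma sepR_comm {t : BT} {x z : ℕ} (h : SepR t x z) :
    leafInsR (leafInsR t x) z = leafInsR (leafInsR t z) x := by
  induction t with
  | leaf => exact absurd h (by simp)
  | node l b r ihl ihr =>
      rw [SepR_node] at h
      by_cases hx : x ≤ b <;> by_cases hz : z ≤ b <;>
        simp [leafInsR_node, hx, hz] at h ⊢
      · exact ihl h
      · exact ihr h

lemma sepL_insert {t : BT} {x z : ℕ} (a : ℕ) (h : SepL t x z) : SepL (leafInsL t a) x z := by
  induction t with
  | leaf => exact absurd h (by simp)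
  | node l b r ihl ihr =>
      rw [SepL_node] at h
      by_cases ha : a < b <;> by_cases hx : x < b <;> by_cases hz : z < b <;>
        simp [leafInsL_node, ha, SepL_node, hx, hz] at h ⊢ <;>
        first | exact ihl h | exact ihr h | exact h

lemma sepR_insert {t : BT} {x z : ℕ} (a : ℕ) (h : SepR t x z) : SepR (leafInsR t a) x z := by
  induction t with
  | leaf => exact absurd h (by simp)
  | node l b r ihl ihr =>
      rw [SepR_node] at h
      by_cases ha : a ≤ b <;> by_cases hx : x ≤ b <;> by_cases hz : z ≤ b <;>
        simp [leafInsR_node, ha, SepR_node, hx, hz] at h ⊢ <;>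
        first | exact ihl h | exact ihr h | exact h

lemma sepL_insLt {t : BT} {x z : ℕ} (w : List ℕ) (h : SepL t x z) : SepL (insLt t w) x z := by
  induction w generalizing t with
  | nil => exact h
  | cons a w ih => exact ih (sepL_insert a h)

lemma sepR_insRt {t : BT} {x z : ℕ} (w : List ℕ) (h : SepR t x z) : SepR (insRt t w) x z := by
  induction w with
  | nil => exact h
  | cons a w ih => exact sepR_insert a ih

lemma sepL_create {a b c : ℕ} (hab : a < b) (hbc : b ≤ c) (t : BT) :
    SepL (leafInsL t b) a c := by
  induction t with
  | leaf =>
      simp only [leafInsL, SepL_node]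
      simp [hab, not_lt.mpr hbc]
  | node l d r ihl ihr =>
      rw [leafInsL_node]
      split_ifs with hbd
      · rw [SepL_node]
        simp only [if_pos (show a < d by omega)]
        split_ifs with h2
        exact ihl
      · rw [SepL_node]
        simp only [if_neg (show ¬ c < d by omega)]
        split_ifs with h1
        exact ihr

lemma sepR_create {a b c : ℕ} (hab : a ≤ b) (hbc : b < c) (t : BT) :
    SepR (leafInsR t b) a c := by
  induction t with
  | leaf =>
      simp only [leafInsR, SepR_node]
      simp [hab, not_le.mpr hbc]
  | node l d r ihl ihr =>
      rw [leafInsR_node]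
      split_ifs with hbd
      · rw [SepR_node]
        simp only [if_pos (show a ≤ d by omega)]
        split_ifs with h2
        exact ihl
      · rw [SepR_node]
        simp only [if_neg (show ¬ c ≤ d by omega)]
        split_ifs with h1
        exact ihr

lemma sepL_wit {t : BT} {x z : ℕ} (h : SepL t x z) :
    ∃ m ∈ mlab t, (x < m ∧ m ≤ z) ∨ (z < m ∧ m ≤ x) := by
  induction t with
  | leaf => exact absurd h (by simp)
  | node l b r ihl ihr =>
      rw [SepL_node] at h
      split_ifs at h with hx hz hz
      · obtain ⟨m, hm, hc⟩ := ihl h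
        exact ⟨m, by simp [hm], hc⟩
      · exact ⟨b, by simp, Or.inl ⟨hx, by omega⟩⟩
      · exact ⟨b, by simp, Or.inr ⟨hz, by omega⟩⟩
      · obtain ⟨m, hm, hc⟩ := ihr h
        exact ⟨m, by simp [hm], hc⟩

lemma sepR_wit {t : BT} {x z : ℕ} (h : SepR t x z) :
    ∃ m ∈ mlab t, (x ≤ m ∧ m < z) ∨ (z ≤ m ∧ m < x) := by
  induction t with
  | leaf => exact absurd h (by simp)
  | node l b r ihl ihr =>
      rw [SepR_node] at h
      split_ifs at h with hx hz hz
      · obtain ⟨m, hm, hc⟩ := ihl h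
        exact ⟨m, by simp [hm], hc⟩
      · exact ⟨b, by simp, Or.inl ⟨hx, by omega⟩⟩
      · exact ⟨b, by simp, Or.inr ⟨hz, by omega⟩⟩
      · obtain ⟨m, hm, hc⟩ := ihr h
        exact ⟨m, by simp [hm], hc⟩

/-! ### BST invariant for right insertion -/

def BSTR : BT → Prop
  | .leaf => True
  | .node l b r => (∀ y ∈ mlab l, y ≤ b) ∧ (∀ y ∈ mlab r, b < y) ∧ BSTR l ∧ BSTR r

@[simp] lemma BSTR_leaf : BSTR .leaf := trivial
lemma BSTR_node (l : BT) (b : ℕ) (r : BT) :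
    BSTR (.node l b r) =
      ((∀ y ∈ mlab l, y ≤ b) ∧ (∀ y ∈ mlab r, b < y) ∧ BSTR l ∧ BSTR r) := rfl

lemma BSTR_leafInsR {t : BT} (h : BSTR t) (a : ℕ) : BSTR (leafInsR t a) := by
  induction t with
  | leaf => simp [leafInsR, BSTR_node]
  | node l b r ihl ihr =>
      rw [BSTR_node] at h
      obtain ⟨h1, h2, h3, h4⟩ := h
      rw [leafInsR_node]
      split_ifs with hab
      · rw [BSTR_node]
        refine ⟨?_, h2, ihl h3, h4⟩
        intro y hy
        rw [mlab_leafInsR] at hy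
        rcases Multiset.mem_cons.1 hy with rfl | hy
        · exact hab
        · exact h1 y hy
      · rw [BSTR_node]
        refine ⟨h1, ?_, h3, ihr h4⟩
        intro y hy
        rw [mlab_leafInsR] at hy
        rcases Multiset.mem_cons.1 hy with rfl | hy
        · omega
        · exact h2 y hy

lemma BSTR_insRt {t : BT} (h : BSTR t) (w : List ℕ) : BSTR (insRt t w) := by
  induction w with
  | nil => exact h
  | cons a w ih => exact BSTR_leafInsR ih a

/-! ### Soundness: the congruences preserve the insertion trees -/

lemma eqvGen_lift {α : Type*} {R S : α → α → Prop}
    (h : ∀ a b, R a b → Relation.EqvGen S a b) :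
    ∀ {a b}, Relation.EqvGen R a b → Relation.EqvGen S a b := by
  intro a b hab
  induction hab with
  | rel a b hr => exact h a b hr
  | refl a => exact Relation.EqvGen.refl a
  | symm a b _ ih => exact Relation.EqvGen.symm _ _ ih
  | trans a b c _ _ ih1 ih2 => exact Relation.EqvGen.trans _ _ _ ih1 ih2

lemma sylvAdj_insRt {X X' : List ℕ} (h : SylvAdj X X') (t : BT) (S : List ℕ) :
    insRt t (X ++ S) = insRt t (X' ++ S) := by
  obtain ⟨a, b, c, U, hab, hbc, rfl, rfl⟩ := h
  simp only [List.cons_append, insRt_cons]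
  have hsep : SepR (insRt t ((U ++ [b]) ++ S)) a c := by
    rw [insRt_append, insRt_append]
    exact sepR_insRt U (by simpa using sepR_create hab hbc (insRt t S))
  have := sepR_comm hsep
  simpa [List.append_assoc] using this.symm

lemma sylvHAdj_insLt {X X' : List ℕ} (h : SylvHAdj X X') (t : BT) :
    insLt t X = insLt t X' := by
  obtain ⟨a, b, c, U, hab, hbc, rfl, rfl⟩ := h
  simp only [insLt_cons, insLt_append]
  have hsep : SepL (insLt (leafInsL t b) U) a c :=
    sepL_insLt U (sepL_create hab hbc t)
  simpa using sepL_comm hsep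

lemma sylvStep_insRt {w w' : List ℕ} (h : SylvStep w w') :
    insRt .leaf w = insRt .leaf w' := by
  obtain ⟨P, S, X, X', hadj, rfl, rfl⟩ := h
  have h2 := sylvAdj_insRt hadj BT.leaf S
  simp only [List.append_assoc, insRt_append] at h2 ⊢
  rw [h2]

lemma sylvHStep_insLt {w w' : List ℕ} (h : SylvHStep w w') :
    insLt .leaf w = insLt .leaf w' := by
  obtain ⟨P, S, X, X', hadj, rfl, rfl⟩ := h
  have h2 := sylvHAdj_insLt hadj (insLt BT.leaf P)
  simp only [insLt_append] at h2 ⊢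
  rw [h2]

lemma sylvEquiv_insRt {w w' : List ℕ} (h : SylvEquiv w w') :
    insRt .leaf w = insRt .leaf w' := by
  induction h with
  | rel a b hr => exact sylvStep_insRt hr
  | refl a => rfl
  | symm a b _ ih => exact ih.symm
  | trans a b c _ _ ih1 ih2 => exact ih1.trans ih2

lemma sylvHEquiv_insLt {w w' : List ℕ} (h : SylvHEquiv w w') :
    insLt .leaf w = insLt .leaf w' := by
  induction h with
  | rel a b hr => exact sylvHStep_insLt hr
  | refl a => rfl
  | symm a b _ ih => exact ih.symm
  | trans a b c _ _ ih1 ih2 => exact ih1.trans ih2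

/-! ### The easy direction: Baxter steps are sylvester and #-sylvester moves -/

lemma baxterStep_sylvEquiv {w w' : List ℕ} (h : BaxterStep w w') : SylvEquiv w w' := by
  obtain ⟨P, S, X, X', hadj, rfl, rfl⟩ := h
  rcases hadj with ⟨a, b, c, d, u1, v1, hab, hbc, hcd, rfl, rfl⟩ |
    ⟨a, b, c, d, u1, v1, hab, hbc, hcd, rfl, rfl⟩
  · refine Relation.EqvGen.rel _ _
      ⟨P ++ c :: u1, S, _, _,
        ⟨a, b, d, v1, hab, lt_of_lt_of_le hbc hcd, rfl, rfl⟩, ?_, ?_⟩ <;>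
      simp [List.append_assoc]
  · refine Relation.EqvGen.symm _ _ (Relation.EqvGen.rel _ _
      ⟨P ++ b :: u1, S, _, _,
        ⟨a, c, d, v1, le_trans hab.le hbc, hcd, rfl, rfl⟩, ?_, ?_⟩) <;>
      simp [List.append_assoc]

lemma baxterStep_sylvHEquiv {w w' : List ℕ} (h : BaxterStep w w') : SylvHEquiv w w' := by
  obtain ⟨P, S, X, X', hadj, rfl, rfl⟩ := h
  rcases hadj with ⟨a, b, c, d, u1, v1, hab, hbc, hcd, rfl, rfl⟩ |
    ⟨a, b, c, d, u1, v1, hab, hbc, hcd, rfl, rfl⟩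
  · refine Relation.EqvGen.rel _ _
      ⟨P, v1 ++ b :: S, _, _,
        ⟨a, c, d, u1, lt_of_le_of_lt hab hbc, hcd, rfl, rfl⟩, ?_, ?_⟩ <;>
      simp [List.append_assoc]
  · refine Relation.EqvGen.symm _ _ (Relation.EqvGen.rel _ _
      ⟨P, v1 ++ c :: S, _, _,
        ⟨a, b, d, u1, hab, hbc.trans hcd.le, rfl, rfl⟩, ?_, ?_⟩) <;>
      simp [List.append_assoc]

lemma baxterEquiv_sylvEquiv {w w' : List ℕ} (h : BaxterEquiv w w') : SylvEquiv w w' :=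
  eqvGen_lift (fun _ _ hr => baxterStep_sylvEquiv hr) h

lemma baxterEquiv_sylvHEquiv {w w' : List ℕ} (h : BaxterEquiv w w') : SylvHEquiv w w' :=
  eqvGen_lift (fun _ _ hr => baxterStep_sylvHEquiv hr) h

lemma baxterEquiv_insLt {w w' : List ℕ} (h : BaxterEquiv w w') :
    insLt .leaf w = insLt .leaf w' := sylvHEquiv_insLt (baxterEquiv_sylvHEquiv h)

lemma baxterEquiv_insRt {w w' : List ℕ} (h : BaxterEquiv w w') :
    insRt .leaf w = insRt .leaf w' := sylvEquiv_insRt (baxterEquiv_sylvEquiv h)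

/-! ### First occurrence decomposition -/

lemma exists_first_split {x : ℕ} : ∀ {l : List ℕ}, x ∈ l →
    ∃ q r, l = q ++ x :: r ∧ x ∉ q := by
  intro l
  induction l with
  | nil => intro h; cases h
  | cons a l ih =>
      intro h
      by_cases hax : x = a
      · subst hax
        exact ⟨[], l, rfl, by simp⟩
      · have hmem : x ∈ l := by
          rcases List.mem_cons.1 h with h' | h'
          · exact absurd h' hax
          · exact h'
        obtain ⟨q, r, rfl, hq⟩ := ih hmem
        exact ⟨a :: q, r, rfl, by simp [hax, hq]⟩

/-! ### Key divergence lemmas -/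

lemma coe_filter_aux (p : ℕ → Prop) [DecidablePred p] (q : List ℕ) :
    Multiset.filter p (q : Multiset ℕ) = ((q.filter fun y => decide (p y) : List ℕ) : Multiset ℕ) := by
  induction q with
  | nil => simp
  | cons a q ih =>
      by_cases h : p a <;> simp [List.filter_cons, h, ih]

lemma mset_cancel {A B C D : Multiset ℕ} {b : ℕ} (q : List ℕ)
    (hA : ∀ y ∈ A, y ≤ b) (hB : ∀ y ∈ B, b < y) (hC : ∀ y ∈ C, y ≤ b) (hD : ∀ y ∈ D, b < y)
    (h : b ::ₘ (A + B) = (b ::ₘ (C + D)) + (q : Multiset ℕ)) :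
    A = C + ((q.filter fun y => decide (y ≤ b) : List ℕ) : Multiset ℕ) ∧
    B = D + ((q.filter fun y => decide (¬ y ≤ b) : List ℕ) : Multiset ℕ) := by
  have h' : A + B = (C + D) + (q : Multiset ℕ) := by
    have h2 : b ::ₘ (A + B) = b ::ₘ ((C + D) + (q : Multiset ℕ)) := by
      rw [h, Multiset.cons_add]
    exact (Multiset.cons_inj_right b).1 h2
  constructor
  · have hf := congrArg (Multiset.filter (fun y => y ≤ b)) h'
    simp only [Multiset.filter_add] at hf
    rwa [Multiset.filter_eq_self.2 hA, Multiset.filter_eq_self.2 hC,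
      Multiset.filter_eq_nil.2 (fun y hy => not_le.2 (hB y hy)),
      Multiset.filter_eq_nil.2 (fun y hy => not_le.2 (hD y hy)),
      coe_filter_aux, add_zero, add_zero] at hf
  · have hf := congrArg (Multiset.filter (fun y => ¬ y ≤ b)) h'
    simp only [Multiset.filter_add] at hf
    rwa [Multiset.filter_eq_self.2 (fun y hy => not_le.2 (hB y hy)),
      Multiset.filter_eq_self.2 (fun y hy => not_le.2 (hD y hy)),
      Multiset.filter_eq_nil.2 (fun y hy => not_not.2 (hA y hy)),
      Multiset.filter_eq_nil.2 (fun y hy => not_not.2 (hC y hy)),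
      coe_filter_aux, zero_add, zero_add] at hf

def rootOpt : BT → Option ℕ
  | .leaf => none
  | .node _ b _ => some b

lemma rootOpt_leafInsR_node (l : BT) (b : ℕ) (r : BT) (x : ℕ) :
    rootOpt (leafInsR (.node l b r) x) = some b := by
  rw [leafInsR_node]; split_ifs <;> rfl

lemma rootOpt_insRt_node (l : BT) (b : ℕ) (r : BT) (w : List ℕ) :
    rootOpt (insRt (.node l b r) w) = some b := by
  rw [insRt_node]; rfl

/-- Divergence in the left tree: if `x` is inserted first on one side and after `q`
on the other, and the results agree, `x` separates in the seed tree from every `z ∈ q`. -/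
lemma divL {x z : ℕ} : ∀ (t : BT) (A q B₂ : List ℕ), x ∉ q → z ≠ x →
    insLt (leafInsL t x) A = insLt t (q ++ z :: B₂) → SepL t x z := by
  intro t
  induction t with
  | leaf =>
      intro A q B₂ hq hzx h
      exfalso
      have hL : ∃ L R, insLt (leafInsL BT.leaf x) A = BT.node L x R := by
        rw [show leafInsL BT.leaf x = BT.node BT.leaf x BT.leaf from rfl, insLt_node]
        exact ⟨_, _, rfl⟩
      obtain ⟨L, R, hLR⟩ := hL
      cases q with
      | nil =>
          rw [hLR] at h
          simp only [List.nil_append, insLt_cons] at h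
          rw [show leafInsL BT.leaf z = BT.node BT.leaf z BT.leaf from rfl, insLt_node,
            BT.node.injEq] at h
          exact hzx h.2.1.symm
      | cons a q' =>
          rw [hLR] at h
          simp only [List.cons_append, insLt_cons] at h
          rw [show leafInsL BT.leaf a = BT.node BT.leaf a BT.leaf from rfl, insLt_node,
            BT.node.injEq] at h
          exact hq (by simp [h.2.1])
  | node l b r ihl ihr =>
      intro A q B₂ hq hzx h
      rw [leafInsL_node] at h
      by_cases hx : x < b
      · rw [if_pos hx, insLt_node, insLt_node, BT.node.injEq] at h
        obtain ⟨h1, -, -⟩ := h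
        rw [SepL_node, if_pos hx]
        by_cases hz : z < b
        · rw [if_pos hz]
          have hf : (q ++ z :: B₂).filter (fun y => decide (y < b)) =
              q.filter (fun y => decide (y < b)) ++ z :: B₂.filter (fun y => decide (y < b)) := by
            simp [List.filter_append, List.filter_cons, hz]
          rw [hf] at h1
          exact ihl _ _ _ (fun hmem => hq (List.mem_of_mem_filter hmem)) hzx h1
        · rw [if_neg hz]; trivial
      · rw [if_neg hx, insLt_node, insLt_node, BT.node.injEq] at h
        obtain ⟨-, -, h3⟩ := h
        rw [SepL_node, if_neg hx]
        by_cases hz : z < b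
        · rw [if_pos hz]; trivial
        · rw [if_neg hz]
          have hf : (q ++ z :: B₂).filter (fun y => decide (¬ y < b)) =
              q.filter (fun y => decide (¬ y < b)) ++ z :: B₂.filter (fun y => decide (¬ y < b)) := by
            simp [List.filter_append, List.filter_cons, hz]
          rw [hf] at h3
          exact ihr _ _ _ (fun hmem => hq (List.mem_of_mem_filter hmem)) hzx h3

/-- Divergence in the right tree: if `x` is inserted last on one side, and on the other
side first, followed by `q`, then `x` separates from every `z ∈ q` in the seed tree. -/
lemma divR {x z : ℕ} : ∀ (T2 T1 : BT) (q : List ℕ), BSTR T1 → BSTR T2 →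
    mlab T1 = mlab T2 + (q : Multiset ℕ) → x ∉ q → z ∈ q →
    leafInsR T1 x = insRt (leafInsR T2 x) q → SepR T2 x z := by
  intro T2
  induction T2 with
  | leaf =>
      intro T1 q hB1 hB2 hm hq hz h
      exfalso
      cases T1 with
      | leaf =>
          rw [show mlab BT.leaf = 0 from rfl, zero_add] at hm
          have : q = [] := by simpa using hm.symm
          subst this
          exact List.not_mem_nil hz
      | node l1 b1 r1 =>
          have hroot := congrArg rootOpt h
          rw [rootOpt_leafInsR_node] at hroot
          rw [show leafInsR BT.leaf x = BT.node BT.leaf x BT.leaf from rfl,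
            rootOpt_insRt_node] at hroot
          have hbx : b1 = x := by simpa using hroot
          have hmem : b1 ∈ mlab (BT.node l1 b1 r1) := by simp
          rw [hm, mlab_leaf, zero_add] at hmem
          rw [Multiset.mem_coe] at hmem
          exact hq (hbx ▸ hmem)
  | node l b r ihl ihr =>
      intro T1 q hB1 hB2 hm hq hz h
      cases T1 with
      | leaf =>
          exfalso
          rw [mlab_leaf, mlab_node] at hm
          have : b ∈ (0 : Multiset ℕ) := by rw [hm]; simp
          simp at this
      | node l1 b1 r1 =>
          have hroot := congrArg rootOpt h
          rw [rootOpt_leafInsR_node] at hroot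
          have hroot2 : rootOpt (insRt (leafInsR (BT.node l b r) x) q) = some b := by
            rw [leafInsR_node]
            split_ifs <;> rw [rootOpt_insRt_node]
          rw [hroot2] at hroot
          have hb : b = b1 := by simpa using hroot.symm
          subst hb
          rw [BSTR_node] at hB1 hB2
          obtain ⟨hb1a, hb1b, hB1l, hB1r⟩ := hB1
          obtain ⟨hb2a, hb2b, hB2l, hB2r⟩ := hB2
          rw [mlab_node, mlab_node] at hm
          obtain ⟨hmL, hmR⟩ := mset_cancel q hb1a hb1b hb2a hb2b hm
          by_cases hxb : x ≤ b
          · rw [leafInsR_node, if_pos hxb, leafInsR_node, if_pos hxb, insRt_node,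
              BT.node.injEq] at h
            obtain ⟨h1, -, -⟩ := h
            rw [SepR_node, if_pos hxb]
            by_cases hzb : z ≤ b
            · rw [if_pos hzb]
              exact ihl l1 _ hB1l hB2l hmL
                (fun hmem => hq (List.mem_of_mem_filter hmem))
                (List.mem_filter.2 ⟨hz, by simpa using hzb⟩) h1
            · rw [if_neg hzb]; trivial
          · rw [leafInsR_node, if_neg hxb, leafInsR_node, if_neg hxb, insRt_node,
              BT.node.injEq] at h
            obtain ⟨-, -, h3⟩ := h
            rw [SepR_node, if_neg hxb]
            by_cases hzb : z ≤ b
            · rw [if_pos hzb]; trivial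
            · rw [if_neg hzb]
              exact ihr r1 _ hB1r hB2r hmR
                (fun hmem => hq (List.mem_of_mem_filter hmem))
                (List.mem_filter.2 ⟨hz, by simpa using hzb⟩) h3

/-! ### The swap and bubble lemmas -/

lemma swap_step (P Q R S : List ℕ) (x z m m' : ℕ) (hzx : z ≠ x)
    (h1 : min x z ≤ m) (h2 : m < max x z) (h3 : min x z < m') (h4 : m' ≤ max x z) :
    BaxterEquiv (P ++ m' :: (Q ++ z :: x :: (R ++ m :: S)))
                (P ++ m' :: (Q ++ x :: z :: (R ++ m :: S))) := by
  rcases Nat.lt_or_ge x z with hxz | hxz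
  · rw [min_eq_left hxz.le] at h1 h3
    rw [max_eq_right hxz.le] at h2 h4
    rcases Nat.lt_or_ge m m' with hmm | hmm
    · have hstep : BaxterStep (P ++ m' :: (Q ++ x :: z :: (R ++ m :: S)))
          (P ++ m' :: (Q ++ z :: x :: (R ++ m :: S))) := by
        refine ⟨P, S, m' :: (Q ++ x :: z :: (R ++ [m])), m' :: (Q ++ z :: x :: (R ++ [m])),
          Or.inl ⟨x, m, m', z, Q, R, h1, hmm, h4, rfl, rfl⟩, ?_, ?_⟩ <;>
          simp [List.append_assoc]
      exact Relation.EqvGen.symm _ _ (Relation.EqvGen.rel _ _ hstep)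
    · have hstep : BaxterStep (P ++ m' :: (Q ++ z :: x :: (R ++ m :: S)))
          (P ++ m' :: (Q ++ x :: z :: (R ++ m :: S))) := by
        refine ⟨P, S, m' :: (Q ++ z :: x :: (R ++ [m])), m' :: (Q ++ x :: z :: (R ++ [m])),
          Or.inr ⟨x, m', m, z, Q, R, h3, hmm, h2, rfl, rfl⟩, ?_, ?_⟩ <;>
          simp [List.append_assoc]
      exact Relation.EqvGen.rel _ _ hstep
  · have hzx' : z < x := lt_of_le_of_ne hxz hzx
    rw [min_eq_right hzx'.le] at h1 h3
    rw [max_eq_left hzx'.le] at h2 h4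
    rcases Nat.lt_or_ge m m' with hmm | hmm
    · have hstep : BaxterStep (P ++ m' :: (Q ++ z :: x :: (R ++ m :: S)))
          (P ++ m' :: (Q ++ x :: z :: (R ++ m :: S))) := by
        refine ⟨P, S, m' :: (Q ++ z :: x :: (R ++ [m])), m' :: (Q ++ x :: z :: (R ++ [m])),
          Or.inl ⟨z, m, m', x, Q, R, h1, hmm, h4, rfl, rfl⟩, ?_, ?_⟩ <;>
          simp [List.append_assoc]
      exact Relation.EqvGen.rel _ _ hstep
    · have hstep : BaxterStep (P ++ m' :: (Q ++ x :: z :: (R ++ m :: S)))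
          (P ++ m' :: (Q ++ z :: x :: (R ++ m :: S))) := by
        refine ⟨P, S, m' :: (Q ++ x :: z :: (R ++ [m])), m' :: (Q ++ z :: x :: (R ++ [m])),
          Or.inr ⟨z, m', m, x, Q, R, h3, hmm, h2, rfl, rfl⟩, ?_, ?_⟩ <;>
          simp [List.append_assoc]
      exact Relation.EqvGen.symm _ _ (Relation.EqvGen.rel _ _ hstep)

lemma bubble (p : List ℕ) (x : ℕ) : ∀ (q R : List ℕ),
    (∀ z ∈ q, z ≠ x ∧ (∃ w ∈ p, min x z < w ∧ w ≤ max x z) ∧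
      (∃ w ∈ R, min x z ≤ w ∧ w < max x z)) →
    BaxterEquiv (p ++ q ++ x :: R) (p ++ x :: (q ++ R)) := by
  intro q
  induction q using List.reverseRecOn with
  | nil =>
      intro R _
      simp only [List.append_nil, List.nil_append]
      exact Relation.EqvGen.refl _
  | append_singleton q z ih =>
      intro R hW
      obtain ⟨hzx, ⟨m', hm'p, hm'1, hm'2⟩, ⟨m, hmR, hm1, hm2⟩⟩ := hW z (by simp)
      obtain ⟨P0, P1, rfl⟩ := List.append_of_mem hm'p
      obtain ⟨R1, R2, rfl⟩ := List.append_of_mem hmR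
      have step := swap_step P0 (P1 ++ q) R1 R2 x z m m' hzx hm1 hm2 hm'1 hm'2
      have hW' : ∀ z1 ∈ q, z1 ≠ x ∧
          (∃ w ∈ P0 ++ m' :: P1, min x z1 < w ∧ w ≤ max x z1) ∧
          (∃ w ∈ z :: (R1 ++ m :: R2), min x z1 ≤ w ∧ w < max x z1) := by
        intro z1 hz1
        obtain ⟨h1, h2, h3⟩ := hW z1 (by simp [hz1])
        refine ⟨h1, h2, ?_⟩
        obtain ⟨w, hw, hc⟩ := h3
        exact ⟨w, List.mem_cons_of_mem _ hw, hc⟩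
      have ih' := ih (z :: (R1 ++ m :: R2)) hW'
      simp only [List.append_assoc, List.cons_append, List.singleton_append,
        List.nil_append] at step ih' ⊢
      exact Relation.EqvGen.trans _ _ _ step ih'

/-! ### The main induction -/

lemma main_ind : ∀ (n : ℕ) (w w' p s : List ℕ), w.length ≤ n →
    insLt (insLt BT.leaf p) w = insLt (insLt BT.leaf p) w' →
    insRt (insRt BT.leaf s) w = insRt (insRt BT.leaf s) w' →
    BaxterEquiv (p ++ w ++ s) (p ++ w' ++ s) := by
  intro n
  induction n with
  | zero =>
      intro w w' p s hlen hL hR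
      have hw : w = [] := List.length_eq_zero_iff.1 (Nat.le_zero.1 hlen)
      subst hw
      have h2 := congrArg mlab hL
      rw [insLt_nil] at h2
      simp only [mlab_insLt] at h2
      have h3 : (w' : Multiset ℕ) = 0 := left_eq_add.1 h2
      have hw' : w' = [] := by simpa using h3
      subst hw'
      exact Relation.EqvGen.refl _
  | succ n ih =>
      intro w w' p s hlen hL hR
      cases w with
      | nil =>
          have h2 := congrArg mlab hL
          rw [insLt_nil] at h2
          simp only [mlab_insLt] at h2
          have h3 : (w' : Multiset ℕ) = 0 := left_eq_add.1 h2
          have hw' : w' = [] := by simpa using h3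
          subst hw'
          exact Relation.EqvGen.refl _
      | cons x w2 =>
          have hcoe : x ::ₘ (w2 : Multiset ℕ) = (w' : Multiset ℕ) := by
            have h2 := congrArg mlab hL
            simp only [mlab_insLt] at h2
            rw [Multiset.cons_coe]
            exact add_left_cancel h2
          have hxmem : x ∈ w' := by
            have h2 : x ∈ (w' : Multiset ℕ) := by
              rw [← hcoe]; exact Multiset.mem_cons_self _ _
            simpa using h2
          obtain ⟨q, r, rfl, hq⟩ := exists_first_split hxmem
          have hcoe2 : (w2 : Multiset ℕ) = (q : Multiset ℕ) + (r : Multiset ℕ) := by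
            have h4 : ((q ++ x :: r : List ℕ) : Multiset ℕ)
                = x ::ₘ ((q : Multiset ℕ) + (r : Multiset ℕ)) := by
              rw [← Multiset.coe_add, ← Multiset.cons_coe, Multiset.add_cons]
            have h5 := hcoe.trans h4
            exact (Multiset.cons_inj_right x).1 h5
          -- normalized tree hypotheses
          have hLn := hL
          simp only [insLt_cons, insLt_append] at hLn
          have hRn := hR
          simp only [insRt_cons, insRt_append] at hRn
          -- the witnesses for bubbling
          have hWits : ∀ z ∈ q, z ≠ x ∧ (∃ m' ∈ p, min x z < m' ∧ m' ≤ max x z) ∧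
              (∃ m ∈ r ++ s, min x z ≤ m ∧ m < max x z) := by
            intro z hzq
            have hzx : z ≠ x := fun h => hq (h ▸ hzq)
            refine ⟨hzx, ?_, ?_⟩
            · obtain ⟨q0, q1, hqeq⟩ := List.append_of_mem hzq
              have hx0 : x ∉ q0 := fun h => hq (by rw [hqeq]; exact List.mem_append.2 (Or.inl h))
              have heq : insLt (leafInsL (insLt BT.leaf p) x) w2
                  = insLt (insLt BT.leaf p) (q0 ++ z :: (q1 ++ x :: r)) := by
                have h6 := hL
                simp only [insLt_cons] at h6
                rw [hqeq] at h6
                simpa [List.append_assoc] using h6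
              have hsep := divL (insLt BT.leaf p) w2 q0 (q1 ++ x :: r) hx0 hzx heq
              obtain ⟨m', hm'mem, hc⟩ := sepL_wit hsep
              have hm'p : m' ∈ p := by
                rw [mlab_insLt] at hm'mem
                simpa using hm'mem
              exact ⟨m', hm'p, by rcases hc with ⟨h6, h7⟩ | ⟨h6, h7⟩ <;> constructor <;> omega⟩
            · have hB1 : BSTR (insRt (insRt BT.leaf s) w2) :=
                BSTR_insRt (BSTR_insRt BSTR_leaf s) w2
              have hB2 : BSTR (insRt (insRt BT.leaf s) r) :=
                BSTR_insRt (BSTR_insRt BSTR_leaf s) r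
              have hms : mlab (insRt (insRt BT.leaf s) w2)
                  = mlab (insRt (insRt BT.leaf s) r) + (q : Multiset ℕ) := by
                simp only [mlab_insRt]
                rw [hcoe2, add_comm (q : Multiset ℕ) (r : Multiset ℕ), ← add_assoc]
              have hsep := divR (insRt (insRt BT.leaf s) r) (insRt (insRt BT.leaf s) w2) q
                hB1 hB2 hms hq hzq hRn
              obtain ⟨m, hmmem, hc⟩ := sepR_wit hsep
              have hmrs : m ∈ r ++ s := by
                simp only [mlab_insRt, mlab_leaf, zero_add] at hmmem
                rcases Multiset.mem_add.1 hmmem with h6 | h6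
                · exact List.mem_append.2 (Or.inr (by simpa using h6))
                · exact List.mem_append.2 (Or.inl (by simpa using h6))
              exact ⟨m, hmrs, by rcases hc with ⟨h6, h7⟩ | ⟨h6, h7⟩ <;> constructor <;> omega⟩
          have hbub := bubble p x q (r ++ s) hWits
          have htL := baxterEquiv_insLt hbub
          have htR := baxterEquiv_insRt hbub
          simp only [insLt_append, insLt_cons] at htL
          simp only [insRt_append, insRt_cons] at htR
          have hL2 := insLt_inj s htL
          have hR2 := insRt_inj p htR
          have hL3 : insLt (leafInsL (insLt BT.leaf p) x) w2
              = insLt (insLt (leafInsL (insLt BT.leaf p) x) q) r := hLn.trans hL2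
          have hR3 : insRt (insRt BT.leaf s) w2 = insRt (insRt (insRt BT.leaf s) r) q :=
            leafInsR_inj (hRn.trans hR2)
          have hlen2 : w2.length ≤ n := by
            simp only [List.length_cons] at hlen
            omega
          have hIH := ih w2 (q ++ r) (p ++ [x]) s hlen2
            (by simp only [insLt_append, insLt_cons, insLt_nil]; exact hL3)
            (by simp only [insRt_append]; exact hR3)
          simp only [List.append_assoc, List.cons_append, List.singleton_append,
            List.nil_append] at hIH hbub ⊢
          exact Relation.EqvGen.trans _ _ _ hIH (Relation.EqvGen.symm _ _ hbub)

end BaxterAux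

/-- two words are Baxter-equivalent iff they are both
sylvester-equivalent and #-sylvester-equivalent. -/
theorem baxter_iff_sylvester_and_sylvesterSharp (u v : List ℕ) :
    BaxterEquiv u v ↔ (SylvEquiv u v ∧ SylvHEquiv u v) := by
  constructor
  · intro h
    exact ⟨BaxterAux.baxterEquiv_sylvEquiv h, BaxterAux.baxterEquiv_sylvHEquiv h⟩
  · rintro ⟨hS, hSH⟩
    have hL : BaxterAux.insLt BT.leaf u = BaxterAux.insLt BT.leaf v :=
      BaxterAux.sylvHEquiv_insLt hSH
    have hR : BaxterAux.insRt BT.leaf u = BaxterAux.insRt BT.leaf v :=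
      BaxterAux.sylvEquiv_insRt hS
    have hmain := BaxterAux.main_ind u.length u v [] [] le_rfl
      (by simpa using hL) (by simpa using hR)
    simpa using hmain
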